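/- Define the bilinear product ξ • v_δ on series over X = {x₀,x₁} (with v_δ = (v_L, v_R) a pair of series) recursively by ∅ • v_δ = 0, (x₀ξ) • v_δ = x₀(ξ • v_δ), and (x₁ξ) • v_δ = x₁(v_L ⧢ ξ + ξ • v_δ) + x₀(v_R ⧢ ξ). Then • satisfies the derivation property over the shuffle product: (η ⧢ ξ) • v_δ = (η • v_δ) ⧢ ξ + η ⧢ (ξ • v_δ) for all words η, ξ. -/
import Mathlib


/-- Formal power series over the alphabet `X = {x₀, x₁}` (encoded as `Bool`,
with `x₀ = false` and `x₁ = true`). -/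
abbrev FPS := List Bool → ℝ

/-- The letter `x₀`. -/
def x₀ : Bool := false

/-- The letter `x₁`. -/
def x₁ : Bool := true

/-- Shuffle product of formal power series, via the left-quotient recursion. -/
noncomputable def shuffle : (List Bool → ℝ) → (List Bool → ℝ) → List Bool → ℝ
  | c, d, [] => c [] * d []
  | c, d, x :: w => shuffle (fun u => c (x :: u)) d w + shuffle c (fun u => d (x :: u)) w

/-- The series `1` (the empty word). -/
noncomputable def oneF : FPS := fun w => match w with | [] => 1 | _ => 0

/-- The series corresponding to a single word. -/
noncomputable def ind (η : List Bool) : FPS := fun w => if w = η then 1 else 0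

/-- Left catenation of the series `e` by a letter `x`: the series `x e`. -/
noncomputable def pre (x : Bool) (e : FPS) : FPS :=
  fun w => match w with
  | [] => 0
  | y :: u => if y = x then e u else 0

/-- The word-indexed family of endomorphisms `φ_d`, determined by
`φ_d(x₀)(e) = x₀ e` and `φ_d(x₁)(e) = x₁(d_L ⧢ e) + x₀(d_R ⧢ e)`. -/
noncomputable def phiW (d : FPS × FPS) : List Bool → FPS → FPS
  | [], e => e
  | x :: η, e =>
      if x then pre x₁ (shuffle d.1 (phiW d η e)) + pre x₀ (shuffle d.2 (phiW d η e))
      else pre x₀ (phiW d η e)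

/-- The mixed composition product `c ∘̃ d_δ = Σ_η (c,η) φ_d(η)(1)`.
(For each word `w` only the finitely many `η` with `|η| ≤ |w|` contribute.) -/
noncomputable def mixedComp (c : FPS) (d : FPS × FPS) : FPS :=
  fun w => ∑' η : List Bool, c η * phiW d η oneF w

/-- The product `ξ • v_δ` on words, for a pair `v_δ = (v_L, v_R)`:
`∅ • v = 0`, `(x₀ξ) • v = x₀(ξ • v)`, `(x₁ξ) • v = x₁(v_L ⧢ ξ + ξ • v) + x₀(v_R ⧢ ξ)`. -/
noncomputable def wordBullet : List Bool → FPS × FPS → FPS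
  | [], _ => 0
  | x :: ξ, v =>
      if x then pre x₁ (shuffle v.1 (ind ξ) + wordBullet ξ v) + pre x₀ (shuffle v.2 (ind ξ))
      else pre x₀ (wordBullet ξ v)

/-- Bilinear extension of `•` to series in the left argument. -/
noncomputable def seriesBullet (c : FPS) (v : FPS × FPS) : FPS :=
  fun w => ∑' ξ : List Bool, c ξ * wordBullet ξ v w

/-! ### Auxiliary lemmas -/

section Aux

lemma shuffle_nil (a b : FPS) : shuffle a b [] = a [] * b [] := rfl

lemma shuffle_cons (a b : FPS) (x : Bool) (w : List Bool) :
    shuffle a b (x :: w) =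
      shuffle (fun u => a (x :: u)) b w + shuffle a (fun u => b (x :: u)) w := rfl

lemma pre_nil (x : Bool) (e : FPS) : pre x e [] = 0 := rfl

lemma pre_cons (x : Bool) (e : FPS) (y : Bool) (u : List Bool) :
    pre x e (y :: u) = if y = x then e u else 0 := rfl

lemma shuffle_zero_left : ∀ (w : List Bool) (c : FPS), shuffle 0 c w = 0
  | [], c => by simp [shuffle_nil]
  | x :: w, c => by
      rw [shuffle_cons]
      rw [show (fun u => (0 : FPS) (x :: u)) = (0 : FPS) from rfl]
      rw [shuffle_zero_left w, shuffle_zero_left w, add_zero]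

lemma shuffle_zero_right : ∀ (w : List Bool) (c : FPS), shuffle c 0 w = 0
  | [], c => by simp [shuffle_nil]
  | x :: w, c => by
      rw [shuffle_cons]
      rw [show (fun u => (0 : FPS) (x :: u)) = (0 : FPS) from rfl]
      rw [shuffle_zero_right w, shuffle_zero_right w, add_zero]

lemma shuffle_zero_leftF (c : FPS) : shuffle 0 c = 0 :=
  funext fun w => shuffle_zero_left w c

lemma shuffle_zero_rightF (c : FPS) : shuffle c 0 = 0 :=
  funext fun w => shuffle_zero_right w c

lemma shuffle_add_left : ∀ (w : List Bool) (a b c : FPS),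
    shuffle (a + b) c w = shuffle a c w + shuffle b c w
  | [], a, b, c => by simp [shuffle_nil]; ring
  | x :: w, a, b, c => by
      rw [shuffle_cons, shuffle_cons, shuffle_cons]
      rw [show (fun u => (a + b) (x :: u)) =
        (fun u => a (x :: u)) + (fun u => b (x :: u)) from rfl]
      rw [shuffle_add_left w, shuffle_add_left w]
      ring

lemma shuffle_add_right : ∀ (w : List Bool) (a b c : FPS),
    shuffle c (a + b) w = shuffle c a w + shuffle c b w
  | [], a, b, c => by simp [shuffle_nil]; ring
  | x :: w, a, b, c => by
      rw [shuffle_cons, shuffle_cons, shuffle_cons]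
      rw [show (fun u => (a + b) (x :: u)) =
        (fun u => a (x :: u)) + (fun u => b (x :: u)) from rfl]
      rw [shuffle_add_right w, shuffle_add_right w]
      ring

lemma shuffle_add_leftF (a b c : FPS) : shuffle (a + b) c = shuffle a c + shuffle b c :=
  funext fun w => shuffle_add_left w a b c

lemma shuffle_add_rightF (a b c : FPS) : shuffle c (a + b) = shuffle c a + shuffle c b :=
  funext fun w => shuffle_add_right w a b c

lemma shuffle_comm : ∀ (w : List Bool) (a b : FPS), shuffle a b w = shuffle b a w
  | [], a, b => by simp [shuffle_nil]; ring
  | x :: w, a, b => by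
      rw [shuffle_cons, shuffle_cons, shuffle_comm w (fun u => a (x :: u)) b,
        shuffle_comm w a (fun u => b (x :: u))]
      ring

lemma shuffle_commF (a b : FPS) : shuffle a b = shuffle b a :=
  funext fun w => shuffle_comm w a b

lemma shuffle_assoc : ∀ (w : List Bool) (a b c : FPS),
    shuffle (shuffle a b) c w = shuffle a (shuffle b c) w
  | [], a, b, c => by simp [shuffle_nil]; ring
  | x :: w, a, b, c => by
      rw [shuffle_cons, shuffle_cons]
      rw [show (fun u => shuffle a b (x :: u)) =
        shuffle (fun u => a (x :: u)) b + shuffle a (fun u => b (x :: u)) from rfl]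
      rw [show (fun u => shuffle b c (x :: u)) =
        shuffle (fun u => b (x :: u)) c + shuffle b (fun u => c (x :: u)) from rfl]
      rw [shuffle_add_left w, shuffle_add_right w,
        shuffle_assoc w, shuffle_assoc w, shuffle_assoc w]
      ring

lemma shuffle_assocF (a b c : FPS) : shuffle (shuffle a b) c = shuffle a (shuffle b c) :=
  funext fun w => shuffle_assoc w a b c

lemma shuffle_left_commF (a b c : FPS) :
    shuffle a (shuffle b c) = shuffle b (shuffle a c) := by
  rw [← shuffle_assocF, shuffle_commF a b, shuffle_assocF]

lemma pre_addF (x : Bool) (a b : FPS) : pre x (a + b) = pre x a + pre x b := by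
  funext w
  cases w with
  | nil => simp [pre_nil]
  | cons y u =>
      simp only [Pi.add_apply, pre_cons]
      by_cases h : y = x <;> simp [h]

lemma shuffle_pre_pre (x y : Bool) (a b : FPS) :
    shuffle (pre x a) (pre y b) =
      pre x (shuffle a (pre y b)) + pre y (shuffle (pre x a) b) := by
  funext w
  cases w with
  | nil => simp [shuffle_nil, pre_nil]
  | cons z u =>
      rw [shuffle_cons]
      rw [show (fun t => pre x a (z :: t)) = (if z = x then a else 0) by
        funext t; rw [pre_cons]; split <;> rfl]
      rw [show (fun t => pre y b (z :: t)) = (if z = y then b else 0) by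
        funext t; rw [pre_cons]; split <;> rfl]
      simp only [Pi.add_apply, pre_cons]
      congr 1
      · split_ifs with h
        · rfl
        · exact shuffle_zero_left u _
      · split_ifs with h
        · rfl
        · exact shuffle_zero_right u _

lemma ind_nil_apply_nil : ind [] ([] : List Bool) = 1 := by simp [ind]

lemma shuffle_one_left : ∀ (w : List Bool) (c : FPS), shuffle (ind []) c w = c w
  | [], c => by simp [shuffle_nil, ind]
  | x :: w, c => by
      rw [shuffle_cons]
      rw [show (fun u => ind [] (x :: u)) = (0 : FPS) by
        funext u; simp [ind]]
      rw [shuffle_zero_left w, shuffle_one_left w]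
      simp

lemma shuffle_one_leftF (c : FPS) : shuffle (ind []) c = c :=
  funext fun w => shuffle_one_left w c

lemma shuffle_one_rightF (c : FPS) : shuffle c (ind []) = c := by
  rw [shuffle_commF, shuffle_one_leftF]

lemma ind_cons (x : Bool) (η : List Bool) : ind (x :: η) = pre x (ind η) := by
  funext w
  cases w with
  | nil => simp [ind, pre_nil]
  | cons y u =>
      rw [pre_cons]
      simp only [ind, List.cons.injEq]
      by_cases h : y = x <;> simp [h]

lemma ind_quot_nil (z : Bool) : (fun t => ind [] (z :: t)) = (0 : FPS) := by
  funext t; simp [ind]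

lemma ind_quot_cons (z y : Bool) (u : List Bool) :
    (fun t => ind (y :: u) (z :: t)) = if z = y then ind u else 0 := by
  funext t
  simp only [ind, List.cons.injEq]
  by_cases h : z = y <;> simp [h, ind]

/-- Vanishing of `shuffle a (ind u) w` for long `u`. -/
lemma shuffle_ind_len : ∀ (w : List Bool) (a : FPS) (u : List Bool),
    w.length < u.length → shuffle a (ind u) w = 0
  | [], a, u, h => by
      cases u with
      | nil => simp at h
      | cons y u' => simp [shuffle_nil, ind]
  | z :: w, a, u, h => by
      cases u with
      | nil => simp at h
      | cons y u' =>
          rw [shuffle_cons]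
          simp only [List.length_cons] at h
          rw [shuffle_ind_len w _ (y :: u') (by simpa using Nat.lt_of_succ_lt_succ (Nat.lt_succ_of_lt h))]
          rw [ind_quot_cons]
          by_cases hzy : z = y
          · rw [if_pos hzy, shuffle_ind_len w a u' (Nat.lt_of_succ_lt_succ h)]
            simp
          · rw [if_neg hzy, shuffle_zero_right]
            simp

/-- Vanishing of `wordBullet ζ v w` for long `ζ`. -/
lemma wordBullet_len (v : FPS × FPS) : ∀ (ζ w : List Bool),
    w.length < ζ.length → wordBullet ζ v w = 0
  | [], w, h => by simp at h
  | x :: ζ', w, h => by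
      cases w with
      | nil =>
          cases x <;> simp [wordBullet, pre_nil]
      | cons z w' =>
          simp only [List.length_cons] at h
          have h' := Nat.lt_of_succ_lt_succ h
          cases x <;>
            simp [wordBullet, pre_cons, x₀, x₁, wordBullet_len v ζ' w' h',
              shuffle_ind_len w' _ ζ' h']

/-- Summability from vanishing beyond a length bound. -/
lemma summable_len {f : List Bool → ℝ} (n : ℕ) (h : ∀ u : List Bool, n < u.length → f u = 0) :
    Summable f := by
  apply summable_of_ne_finset_zero (s := (List.finite_length_le Bool n).toFinset)
  intro u hu
  apply h
  by_contra hn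
  exact hu ((List.finite_length_le Bool n).mem_toFinset.2 (Nat.le_of_not_lt hn))

lemma shuffle_tsum : ∀ (w : List Bool) (a c : FPS),
    shuffle a c w = ∑' u : List Bool, c u * shuffle a (ind u) w
  | [], a, c => by
      rw [tsum_eq_single ([] : List Bool) (by
        intro u hu
        rw [shuffle_nil]
        simp [ind, hu])]
      rw [shuffle_nil, shuffle_nil]
      simp [ind]
      ring
  | z :: w, a, c => by
      rw [shuffle_cons]
      have key : ∀ u : List Bool,
          c u * shuffle a (ind u) (z :: w)
            = c u * shuffle (fun t => a (z :: t)) (ind u) w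
              + c u * shuffle a (fun t => ind u (z :: t)) w := by
        intro u
        rw [shuffle_cons]; ring
      have h1 : Summable fun u : List Bool => c u * shuffle (fun t => a (z :: t)) (ind u) w :=
        summable_len w.length fun u hu => by rw [shuffle_ind_len w _ u hu, mul_zero]
      have h2 : Summable fun u : List Bool => c u * shuffle a (fun t => ind u (z :: t)) w := by
        apply summable_len (w.length + 1)
        intro u hu
        cases u with
        | nil => rw [ind_quot_nil, shuffle_zero_right, mul_zero]
        | cons y u' =>
            rw [ind_quot_cons]
            by_cases hzy : z = y
            · rw [if_pos hzy, shuffle_ind_len w a u'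
                (Nat.lt_of_succ_lt_succ (by simpa using hu)), mul_zero]
            · rw [if_neg hzy, shuffle_zero_right, mul_zero]
      calc shuffle (fun t => a (z :: t)) c w + shuffle a (fun t => c (z :: t)) w
          = (∑' u : List Bool, c u * shuffle (fun t => a (z :: t)) (ind u) w)
            + ∑' u : List Bool, c (z :: u) * shuffle a (ind u) w := by
            rw [shuffle_tsum w, shuffle_tsum w]
        _ = (∑' u : List Bool, c u * shuffle (fun t => a (z :: t)) (ind u) w)
            + ∑' u : List Bool, c u * shuffle a (fun t => ind u (z :: t)) w := by
            congr 1
            have hinj : Function.Injective (List.cons z) := List.cons_injective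
            rw [← hinj.tsum_eq (f := fun u => c u * shuffle a (fun t => ind u (z :: t)) w)]
            · apply tsum_congr
              intro u
              rw [ind_quot_cons, if_pos rfl]
            · intro u hu
              rcases u with _ | ⟨y, u'⟩
              · exact absurd (show c [] * shuffle a (fun t => ind [] (z :: t)) w = 0 by
                  rw [ind_quot_nil, shuffle_zero_right, mul_zero]) hu
              · by_cases hzy : z = y
                · exact ⟨u', by rw [hzy]⟩
                · exact absurd (show c (y :: u') * shuffle a (fun t => ind (y :: u') (z :: t)) w = 0 by
                    rw [ind_quot_cons, if_neg hzy, shuffle_zero_right, mul_zero]) hu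
        _ = ∑' u : List Bool, c u * shuffle a (ind u) (z :: w) := by
            rw [← Summable.tsum_add h1 h2]
            exact tsum_congr fun u => (key u).symm

lemma seriesBullet_ind (ζ : List Bool) (v : FPS × FPS) :
    seriesBullet (ind ζ) v = wordBullet ζ v := by
  funext w
  show (∑' ξ : List Bool, ind ζ ξ * wordBullet ξ v w) = _
  rw [tsum_eq_single ζ (by intro u hu; simp [ind, hu])]
  simp [ind]

lemma seriesBullet_add (c d : FPS) (v : FPS × FPS) :
    seriesBullet (c + d) v = seriesBullet c v + seriesBullet d v := by
  funext w
  show (∑' ξ : List Bool, (c + d) ξ * wordBullet ξ v w) = _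
  have hc : Summable fun ξ : List Bool => c ξ * wordBullet ξ v w :=
    summable_len w.length fun u hu => by rw [wordBullet_len v u w hu, mul_zero]
  have hd : Summable fun ξ : List Bool => d ξ * wordBullet ξ v w :=
    summable_len w.length fun u hu => by rw [wordBullet_len v u w hu, mul_zero]
  rw [show (fun ξ : List Bool => (c + d) ξ * wordBullet ξ v w)
      = fun ξ : List Bool => c ξ * wordBullet ξ v w + d ξ * wordBullet ξ v w by
    funext ξ; simp [add_mul]]
  rw [Summable.tsum_add hc hd]
  rfl

lemma seriesBullet_pre_reindex (x : Bool) (c : FPS) (v : FPS × FPS) (w : List Bool) :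
    seriesBullet (pre x c) v w = ∑' u : List Bool, c u * wordBullet (x :: u) v w := by
  show (∑' ξ : List Bool, pre x c ξ * wordBullet ξ v w) = _
  have hinj : Function.Injective (List.cons x) := List.cons_injective
  rw [← hinj.tsum_eq (f := fun ξ => pre x c ξ * wordBullet ξ v w)]
  · apply tsum_congr
    intro u
    rw [pre_cons, if_pos rfl]
  · intro ξ hξ
    rcases ξ with _ | ⟨y, u⟩
    · exact absurd (show pre x c [] * wordBullet [] v w = 0 by rw [pre_nil, zero_mul]) hξ
    · by_cases hyx : y = x
      · exact ⟨u, by rw [hyx]⟩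
      · exact absurd (show pre x c (y :: u) * wordBullet (y :: u) v w = 0 by
          rw [pre_cons, if_neg hyx, zero_mul]) hξ

lemma seriesBullet_preF (c : FPS) (v : FPS × FPS) :
    seriesBullet (pre false c) v = pre false (seriesBullet c v) := by
  funext w
  rw [seriesBullet_pre_reindex]
  cases w with
  | nil =>
      rw [pre_nil]
      rw [show (fun u : List Bool => c u * wordBullet (false :: u) v []) = fun _ => (0:ℝ) by
        funext u; simp [wordBullet, pre_nil]]
      exact tsum_zero
  | cons z w' =>
      cases z with
      | false =>
          rw [pre_cons, if_pos rfl]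
          apply tsum_congr
          intro u
          simp [wordBullet, pre_cons, x₀]
      | true =>
          rw [pre_cons, if_neg (by simp)]
          rw [show (fun u : List Bool => c u * wordBullet (false :: u) v (true :: w'))
              = fun _ => (0:ℝ) by
            funext u; simp [wordBullet, pre_cons, x₀]]
          exact tsum_zero

lemma seriesBullet_preT (c : FPS) (v : FPS × FPS) :
    seriesBullet (pre true c) v =
      pre true (shuffle v.1 c + seriesBullet c v) + pre false (shuffle v.2 c) := by
  funext w
  rw [seriesBullet_pre_reindex]
  cases w with
  | nil =>
      simp only [Pi.add_apply, pre_nil, add_zero]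
      rw [show (fun u : List Bool => c u * wordBullet (true :: u) v []) = fun _ => (0:ℝ) by
        funext u; simp [wordBullet, pre_nil]]
      exact tsum_zero
  | cons z w' =>
      cases z with
      | true =>
          have hR : (pre true (shuffle v.1 c + seriesBullet c v) + pre false (shuffle v.2 c))
              (true :: w') = shuffle v.1 c w' + seriesBullet c v w' := by
            simp [pre_cons]
          rw [hR]
          have h1 : Summable fun u : List Bool => c u * shuffle v.1 (ind u) w' :=
            summable_len w'.length fun u hu => by rw [shuffle_ind_len w' _ u hu, mul_zero]
          have h2 : Summable fun u : List Bool => c u * wordBullet u v w' :=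
            summable_len w'.length fun u hu => by rw [wordBullet_len v u w' hu, mul_zero]
          rw [show (fun u : List Bool => c u * wordBullet (true :: u) v (true :: w'))
              = fun u : List Bool => c u * shuffle v.1 (ind u) w' + c u * wordBullet u v w' by
            funext u
            simp [wordBullet, pre_cons, x₀, x₁]
            ring]
          rw [Summable.tsum_add h1 h2]
          rw [← shuffle_tsum w' v.1 c]
          rfl
      | false =>
          have hR : (pre true (shuffle v.1 c + seriesBullet c v) + pre false (shuffle v.2 c))
              (false :: w') = shuffle v.2 c w' := by
            simp [pre_cons]
          rw [hR]
          rw [show (fun u : List Bool => c u * wordBullet (true :: u) v (false :: w'))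
              = fun u : List Bool => c u * shuffle v.2 (ind u) w' by
            funext u
            simp [wordBullet, pre_cons, x₀, x₁]]
          rw [← shuffle_tsum w' v.2 c]

lemma wordBullet_nil (v : FPS × FPS) : wordBullet [] v = 0 := rfl

lemma wordBullet_consT (ξ : List Bool) (v : FPS × FPS) :
    wordBullet (true :: ξ) v =
      pre true (shuffle v.1 (ind ξ) + wordBullet ξ v) + pre false (shuffle v.2 (ind ξ)) := by
  simp [wordBullet, x₀, x₁]

lemma wordBullet_consF (ξ : List Bool) (v : FPS × FPS) :
    wordBullet (false :: ξ) v = pre false (wordBullet ξ v) := by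
  simp [wordBullet, x₀]

end Aux

/-- The product `•` is a derivation for the shuffle product:
`(η ⧢ ξ) • v = (η • v) ⧢ ξ + η ⧢ (ξ • v)` for all words `η, ξ`. -/
theorem bullet_shuffle_derivation (η ξ : List Bool) (v : FPS × FPS) :
    seriesBullet (shuffle (ind η) (ind ξ)) v =
      shuffle (wordBullet η v) (ind ξ) + shuffle (ind η) (wordBullet ξ v) := by
  induction η generalizing ξ with
  | nil =>
      rw [shuffle_one_leftF, seriesBullet_ind, wordBullet_nil, shuffle_zero_leftF,
        shuffle_one_leftF, zero_add]
  | cons x η' ihη =>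
      induction ξ with
      | nil =>
          rw [shuffle_one_rightF, seriesBullet_ind, wordBullet_nil, shuffle_zero_rightF,
            shuffle_one_rightF, add_zero]
      | cons y ξ' ihξ =>
          have e1 : ind (x :: η') = pre x (ind η') := ind_cons x η'
          have e2 : ind (y :: ξ') = pre y (ind ξ') := ind_cons y ξ'
          rw [e1, e2, shuffle_pre_pre, seriesBullet_add, ← e1, ← e2]
          cases x <;> cases y <;>
            simp only [seriesBullet_preF, seriesBullet_preT] <;>
            rw [ihη, ihξ] <;>
            simp only [wordBullet_consT, wordBullet_consF, ind_cons] <;>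
            simp only [shuffle_add_leftF, shuffle_add_rightF, pre_addF, shuffle_pre_pre] <;>
            simp only [shuffle_assocF, shuffle_commF, shuffle_left_commF,
              add_assoc, add_comm, add_left_comm]
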